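/- Quality guarantee: Assume assoc_S(A) > 0 for every nonempty A ⊆ V', let A_0 ⊆ V' be feasible, let θ > 0 satisfy pen(A) ≥ θ for every nonempty infeasible A ⊆ V', and let γ > (vol_d(V)/θ)·(vol_g(A_0) + ν_S)/assoc_S(A_0), where vol_d(V) = ∑_{i∈V} d(i). Define R(A) = vol_g(A) + ν_S·unit(A) + γ·pen(A). If f : V' → ℝ with f ≥ 0, f ≠ 0 satisfies R^L(f)/assoc_S^L(f) < (vol_g(A_0) + ν_S)/assoc_S(A_0), then any threshold set A* ∈ {A_i(f) = {j : f(j) ≥ f(i)} : i ∈ V'} minimizing (vol_g(A_i(f)) + ν_S + γ·pen(A_i(f)))/assoc_S(A_i(f)) is feasible and satisfies assoc_S(A*)/(vol_g(A*) + ν_S) > assoc_S(A_0)/(vol_g(A_0) + ν_S). -/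
import Mathlib


open Finset

/-- `Vp S` is the set of experts `V' = V \ S`, as a subtype. -/
abbrev Vp {V : Type*} [Fintype V] [DecidableEq V] (S : Finset V) := {x : V // x ∉ S}

/-- The Lovász extension of a set function `T` (with `T ∅ = 0`): choosing an enumeration
`σ(1), …, σ(m)` of the ground set with `f ∘ σ` nondecreasing (here produced by `Tuple.sort`),
`T^L(f) = ∑_{i=1}^{m−1} T({σ(i+1),…,σ(m)})·(f(σ(i+1)) − f(σ(i))) + T(V')·f(σ(1))`. -/
noncomputable def lovasz {α : Type*} [Fintype α] [DecidableEq α]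
    (T : Finset α → ℝ) (f : α → ℝ) : ℝ :=
  let m := Fintype.card α
  let e : Fin m ≃ α := (Fintype.equivFin α).symm
  let σ : Fin m → α := fun i => e (Tuple.sort (f ∘ e) i)
  (∑ i : Fin m, if h : (i : ℕ) + 1 < m then
      T ((Finset.Ici (⟨(i : ℕ) + 1, h⟩ : Fin m)).image σ) * (f (σ ⟨(i : ℕ) + 1, h⟩) - f (σ i))
    else 0)
  + T Finset.univ * (if h : 0 < m then f (σ ⟨0, h⟩) else 0)

/-- The threshold set `A_i(f) = {j ∈ V' : f(j) ≥ f(i)}`. -/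
noncomputable def thresholdSet {α : Type*} [Fintype α] [DecidableEq α]
    (f : α → ℝ) (i : α) : Finset α :=
  Finset.univ.filter (fun j => f i ≤ f j)

lemma suffix_eq_threshold {α : Type*} [Fintype α] [DecidableEq α] {m : ℕ}
    (f : α → ℝ) (σ : Fin m → α) (hbij : Function.Bijective σ)
    (hmono : Monotone (f ∘ σ)) (i : Fin m) (h : (i : ℕ) + 1 < m)
    (hlt : f (σ i) < f (σ ⟨(i : ℕ) + 1, h⟩)) :
    (Finset.Ici (⟨(i : ℕ) + 1, h⟩ : Fin m)).image σ = thresholdSet f (σ ⟨(i : ℕ) + 1, h⟩) := by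
  ext x
  simp only [thresholdSet, Finset.mem_image, Finset.mem_Ici, Finset.mem_filter,
    Finset.mem_univ, true_and]
  constructor
  · rintro ⟨j, hj, rfl⟩
    exact hmono hj
  · intro hx
    obtain ⟨j, rfl⟩ := hbij.surjective x
    refine ⟨j, ?_, rfl⟩
    by_contra hj
    push_neg at hj
    have hji : j ≤ i := by
      rw [Fin.le_def]
      have := (Fin.lt_def.mp hj)
      simp at this ⊢
      omega
    exact absurd hx (not_le.mpr (lt_of_le_of_lt (hmono hji) hlt))

lemma univ_eq_threshold {α : Type*} [Fintype α] [DecidableEq α] {m : ℕ}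
    (f : α → ℝ) (σ : Fin m → α) (hbij : Function.Bijective σ)
    (hmono : Monotone (f ∘ σ)) (h0 : 0 < m) :
    thresholdSet f (σ ⟨0, h0⟩) = Finset.univ := by
  apply Finset.eq_univ_iff_forall.mpr
  intro x
  simp only [thresholdSet, Finset.mem_filter, Finset.mem_univ, true_and]
  obtain ⟨j, rfl⟩ := hbij.surjective x
  exact hmono (by simp [Fin.le_def])

lemma lovasz_bound {α : Type*} [Fintype α] [DecidableEq α] [Nonempty α]
    (T₁ T₂ : Finset α → ℝ) (f : α → ℝ) (hf : ∀ i, 0 ≤ f i) (hfne : f ≠ 0) (r : ℝ)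
    (hT₂ : ∀ i, 0 < T₂ (thresholdSet f i))
    (hcmp : ∀ i, r * T₂ (thresholdSet f i) ≤ T₁ (thresholdSet f i)) :
    r * lovasz T₂ f ≤ lovasz T₁ f ∧ 0 < lovasz T₂ f := by
  classical
  set m := Fintype.card α with hm
  have hmpos : 0 < m := Fintype.card_pos
  let e : Fin m ≃ α := (Fintype.equivFin α).symm
  let σ : Fin m → α := fun i => e (Tuple.sort (f ∘ e) i)
  have hbij : Function.Bijective σ :=
    e.bijective.comp (Tuple.sort (f ∘ e)).bijective
  have hmono : Monotone (f ∘ σ) := Tuple.monotone_sort (f ∘ e)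
  have hLov : ∀ T : Finset α → ℝ, lovasz T f =
      (∑ i : Fin m, if h : (i : ℕ) + 1 < m then
          T ((Finset.Ici (⟨(i : ℕ) + 1, h⟩ : Fin m)).image σ) * (f (σ ⟨(i : ℕ) + 1, h⟩) - f (σ i))
        else 0)
      + T Finset.univ * (if h : 0 < m then f (σ ⟨0, h⟩) else 0) := fun T => rfl
  have huniv : (Finset.univ : Finset α) = thresholdSet f (σ ⟨0, hmpos⟩) :=
    (univ_eq_threshold f σ hbij hmono hmpos).symm
  have hc : ∀ (i : Fin m) (h : (i : ℕ) + 1 < m), 0 ≤ f (σ ⟨(i : ℕ) + 1, h⟩) - f (σ i) := by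
    intro i h
    have : i ≤ (⟨(i : ℕ) + 1, h⟩ : Fin m) := by simp [Fin.le_def]
    exact sub_nonneg.mpr (hmono this)
  constructor
  · rw [hLov T₁, hLov T₂, mul_add, Finset.mul_sum]
    apply add_le_add
    · apply Finset.sum_le_sum
      intro i _
      by_cases h : (i : ℕ) + 1 < m
      · rw [dif_pos h, dif_pos h]
        rcases (hc i h).eq_or_lt with hz | hpos
        · rw [← hz]; simp
        · rw [suffix_eq_threshold f σ hbij hmono i h (sub_pos.mp hpos)]
          calc r * (T₂ (thresholdSet f (σ ⟨(i : ℕ) + 1, h⟩)) * (f (σ ⟨(i : ℕ) + 1, h⟩) - f (σ i)))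
              = (r * T₂ (thresholdSet f (σ ⟨(i : ℕ) + 1, h⟩))) * (f (σ ⟨(i : ℕ) + 1, h⟩) - f (σ i)) := by
                ring
            _ ≤ _ := mul_le_mul_of_nonneg_right (hcmp _) (hc i h)
      · rw [dif_neg h, dif_neg h]; simp
    · rw [dif_pos hmpos, huniv]
      calc r * (T₂ (thresholdSet f (σ ⟨0, hmpos⟩)) * f (σ ⟨0, hmpos⟩))
          = (r * T₂ (thresholdSet f (σ ⟨0, hmpos⟩))) * f (σ ⟨0, hmpos⟩) := by ring
        _ ≤ _ := mul_le_mul_of_nonneg_right (hcmp _) (hf _)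
  · rw [hLov T₂]
    have hterm : ∀ i : Fin m, 0 ≤ if h : (i : ℕ) + 1 < m then
        T₂ ((Finset.Ici (⟨(i : ℕ) + 1, h⟩ : Fin m)).image σ) * (f (σ ⟨(i : ℕ) + 1, h⟩) - f (σ i))
      else 0 := by
      intro i
      by_cases h : (i : ℕ) + 1 < m
      · rw [dif_pos h]
        rcases (hc i h).eq_or_lt with hz | hpos
        · rw [← hz]; simp
        · rw [suffix_eq_threshold f σ hbij hmono i h (sub_pos.mp hpos)]
          exact mul_nonneg (hT₂ _).le (hc i h)
      · rw [dif_neg h]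
    have hlast : 0 ≤ T₂ Finset.univ * (if h : 0 < m then f (σ ⟨0, h⟩) else 0) := by
      rw [dif_pos hmpos, huniv]
      exact mul_nonneg (hT₂ _).le (hf _)
    by_cases h0 : 0 < f (σ ⟨0, hmpos⟩)
    · have hpos : 0 < T₂ Finset.univ * (if h : 0 < m then f (σ ⟨0, h⟩) else 0) := by
        rw [dif_pos hmpos, huniv]
        exact mul_pos (hT₂ _) h0
      exact add_pos_of_nonneg_of_pos (Finset.sum_nonneg fun i _ => hterm i) hpos
    · have hσ00 : f (σ ⟨0, hmpos⟩) = 0 := le_antisymm (not_lt.mp h0) (hf _)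
      have hex : ∃ j : Fin m, 0 < f (σ j) := by
        by_contra hno
        push_neg at hno
        apply hfne
        funext x
        obtain ⟨j, rfl⟩ := hbij.surjective x
        exact le_antisymm (hno j) (hf _)
      set P : Finset (Fin m) := Finset.univ.filter (fun j => 0 < f (σ j)) with hP
      have hPne : P.Nonempty := by
        obtain ⟨j, hj⟩ := hex
        exact ⟨j, by simp [hP, hj]⟩
      set j₀ := P.min' hPne with hj₀def
      have hj₀ : 0 < f (σ j₀) := by
        have := P.min'_mem hPne
        simp [hP] at this
        exact this
      have hj₀ne : (j₀ : ℕ) ≠ 0 := by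
        intro hz
        have hEq : j₀ = ⟨0, hmpos⟩ := Fin.ext hz
        rw [hEq, hσ00] at hj₀
        exact lt_irrefl 0 hj₀
      set i0 : Fin m := ⟨(j₀ : ℕ) - 1, by omega⟩ with hi0
      have h1 : (i0 : ℕ) + 1 < m := by
        have := j₀.isLt
        simp only [hi0]
        omega
      have hsucc : (⟨(i0 : ℕ) + 1, h1⟩ : Fin m) = j₀ := Fin.ext (by simp only [hi0]; omega)
      have hi0lt : i0 < j₀ := by
        rw [Fin.lt_def]
        simp only [hi0]
        omega
      have hfσi0 : f (σ i0) = 0 := by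
        have hni : i0 ∉ P := fun hmem => absurd (P.min'_le i0 hmem) (not_le.mpr hi0lt)
        simp [hP] at hni
        exact le_antisymm hni (hf _)
      have hposterm : 0 < if h : (i0 : ℕ) + 1 < m then
          T₂ ((Finset.Ici (⟨(i0 : ℕ) + 1, h⟩ : Fin m)).image σ)
            * (f (σ ⟨(i0 : ℕ) + 1, h⟩) - f (σ i0))
        else 0 := by
        rw [dif_pos h1]
        have hlt : f (σ i0) < f (σ ⟨(i0 : ℕ) + 1, h1⟩) := by
          rw [hfσi0, hsucc]; exact hj₀
        rw [suffix_eq_threshold f σ hbij hmono i0 h1 hlt]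
        apply mul_pos (hT₂ _)
        linarith
      have hsumpos : 0 < ∑ i : Fin m, if h : (i : ℕ) + 1 < m then
          T₂ ((Finset.Ici (⟨(i : ℕ) + 1, h⟩ : Fin m)).image σ)
            * (f (σ ⟨(i : ℕ) + 1, h⟩) - f (σ i))
        else 0 :=
        Finset.sum_pos' (fun i _ => hterm i) ⟨i0, Finset.mem_univ _, hposterm⟩
      linarith
/-- **Quality guarantee.** For `γ` above the exact-penalty threshold and
`R(A) = vol_g(A) + ν_S·unit(A) + γ·pen(A)`: if `f ≥ 0`, `f ≠ 0` satisfies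
`R^L(f)/assoc_S^L(f) < (vol_g(A_0) + ν_S)/assoc_S(A_0)`, then any threshold set `A*` of `f`
minimizing `(vol_g(A_i(f)) + ν_S + γ·pen(A_i(f)))/assoc_S(A_i(f))` is feasible and satisfies
`assoc_S(A*)/(vol_g(A*) + ν_S) > assoc_S(A_0)/(vol_g(A_0) + ν_S)`. -/
theorem quality_guarantee
    {V : Type*} [Fintype V] [DecidableEq V] (hV : Nonempty V)
    (w : V → V → ℝ) (hw_symm : ∀ i j, w i j = w j i) (hw_nonneg : ∀ i j, 0 ≤ w i j)
    (g : V → ℝ) (hg : ∀ i, 0 < g i)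
    (S : Finset V) (hVp : Nonempty (Vp S))
    (p : ℕ) (hp : 1 ≤ p)
    (M : Fin p → Vp S → ℝ) (hM : ∀ j i, 0 ≤ M j i) (k l : Fin p → ℝ)
    (dist : Vp S → Vp S → ℝ) (hdist_symm : ∀ u v, dist u v = dist v u)
    (hdist_nonneg : ∀ u v, 0 ≤ dist u v) (d0 : ℝ) (hd0 : 0 ≤ d0)
    -- the degree function d, the restricted degrees d^S, and the constants μ_S, ν_S
    (deg : V → ℝ) (hdeg : deg = fun i => ∑ j, w i j)
    (degS : Vp S → ℝ) (hdegS : degS = fun i => ∑ j ∈ S, w i.1 j)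
    (muS nuS : ℝ) (hmuS : muS = ∑ i ∈ S, ∑ j ∈ S, w i j) (hnuS : nuS = ∑ i ∈ S, g i)
    -- assoc_S(A) = vol_d(A) − cut(A, V'∖A) + vol_{d^S}(A) + μ_S·unit(A)
    (assocS : Finset (Vp S) → ℝ)
    (hassocS : assocS = fun A => (∑ i ∈ A, deg i.1) - (∑ i ∈ A, ∑ j ∈ Aᶜ, w i.1 j.1)
        + (∑ i ∈ A, degS i) + muS * (if A = ∅ then 0 else 1))
    -- the penalty function
    (pen : Finset (Vp S) → ℝ)
    (hpen : pen = fun A => if A = ∅ then 0 else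
        (∑ j, max 0 ((∑ i ∈ A, M j i) - l j)) + (∑ j, max 0 (k j - ∑ i ∈ A, M j i))
        + ∑ u ∈ A, ∑ v ∈ A, max 0 (dist u v - d0))
    -- feasibility
    (Feasible : Finset (Vp S) → Prop)
    (hFeas : Feasible = fun A => A.Nonempty
        ∧ (∀ j, k j ≤ (∑ i ∈ A, M j i) ∧ (∑ i ∈ A, M j i) ≤ l j)
        ∧ ∀ u ∈ A, ∀ v ∈ A, dist u v ≤ d0)
    -- assumptions of the theorem
    (hassoc_pos : ∀ A : Finset (Vp S), A.Nonempty → 0 < assocS A)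
    (A0 : Finset (Vp S)) (hA0 : Feasible A0)
    (θ : ℝ) (hθ : 0 < θ)
    (hθpen : ∀ A : Finset (Vp S), A.Nonempty → ¬ Feasible A → θ ≤ pen A)
    (γ : ℝ)
    (hγ : ((∑ i, deg i) / θ) * (((∑ i ∈ A0, g i.1) + nuS) / assocS A0) < γ)
    -- R(A) = vol_g(A) + ν_S·unit(A) + γ·pen(A)
    (R : Finset (Vp S) → ℝ)
    (hR : R = fun A => (∑ i ∈ A, g i.1) + nuS * (if A = ∅ then 0 else 1) + γ * pen A) :
    ∀ f : Vp S → ℝ, (∀ i, 0 ≤ f i) → f ≠ 0 →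
      lovasz R f / lovasz assocS f < ((∑ i ∈ A0, g i.1) + nuS) / assocS A0 →
      ∀ i : Vp S,
        (∀ i' : Vp S,
          ((∑ j ∈ thresholdSet f i, g j.1) + nuS + γ * pen (thresholdSet f i))
              / assocS (thresholdSet f i)
            ≤ ((∑ j ∈ thresholdSet f i', g j.1) + nuS + γ * pen (thresholdSet f i'))
              / assocS (thresholdSet f i')) →
        Feasible (thresholdSet f i)
        ∧ assocS A0 / ((∑ i ∈ A0, g i.1) + nuS)
            < assocS (thresholdSet f i) / ((∑ j ∈ thresholdSet f i, g j.1) + nuS) := by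
  classical
  intro f hf0 hfne hlov i hmin
  haveI : Nonempty (Vp S) := hVp
  -- basic facts
  have hthresh_ne : ∀ i' : Vp S, (thresholdSet f i').Nonempty :=
    fun i' => ⟨i', by simp [thresholdSet]⟩
  have hA0ne : A0.Nonempty := by
    rw [hFeas] at hA0
    exact hA0.1
  have hnuS0 : 0 ≤ nuS := by
    rw [hnuS]; exact Finset.sum_nonneg fun j _ => (hg j).le
  have hvolA0 : 0 < (∑ i ∈ A0, g i.1) := Finset.sum_pos (fun j _ => hg j.1) hA0ne
  have hDA0 : 0 < assocS A0 := hassoc_pos A0 hA0ne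
  set c0 : ℝ := ((∑ i ∈ A0, g i.1) + nuS) / assocS A0 with hc0def
  have hc0pos : 0 < c0 := div_pos (by linarith) hDA0
  have hDpos : ∀ i' : Vp S, 0 < assocS (thresholdSet f i') :=
    fun i' => hassoc_pos _ (hthresh_ne i')
  -- penalty is nonnegative
  have hpen_nonneg : ∀ A, 0 ≤ pen A := by
    intro A
    rw [hpen]
    dsimp only
    split
    · exact le_rfl
    · refine add_nonneg (add_nonneg ?_ ?_) ?_
      · exact Finset.sum_nonneg fun j _ => le_max_left 0 _
      · exact Finset.sum_nonneg fun j _ => le_max_left 0 _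
      · exact Finset.sum_nonneg fun u _ => Finset.sum_nonneg fun v _ => le_max_left 0 _
  -- total volume facts
  have hvol_nn : 0 ≤ ∑ x, deg x := by
    rw [hdeg]
    exact Finset.sum_nonneg fun x _ => Finset.sum_nonneg fun j _ => hw_nonneg _ _
  have hγpos : 0 < γ :=
    lt_of_le_of_lt (mul_nonneg (div_nonneg hvol_nn hθ.le) hc0pos.le) hγ
  -- R on nonempty sets
  have hRthr : ∀ A : Finset (Vp S), A.Nonempty →
      R A = (∑ j ∈ A, g j.1) + nuS + γ * pen A := by
    intro A hA
    rw [hR]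
    simp [hA.ne_empty]
  -- the minimal ratio
  set r := ((∑ j ∈ thresholdSet f i, g j.1) + nuS + γ * pen (thresholdSet f i))
      / assocS (thresholdSet f i) with hrdef
  have hcmp : ∀ i' : Vp S, r * assocS (thresholdSet f i') ≤ R (thresholdSet f i') := by
    intro i'
    rw [hRthr _ (hthresh_ne i')]
    exact (le_div_iff₀ (hDpos i')).mp (hmin i')
  obtain ⟨hkey, hLpos⟩ := lovasz_bound R assocS f hf0 hfne r hDpos hcmp
  have hr_lt : r < c0 := lt_of_le_of_lt ((le_div_iff₀ hLpos).mpr hkey) hlov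
  -- splitting sums over S and its complement
  have hsplit : ∀ x : V, (∑ j, w x j) = (∑ j ∈ S, w x j) + ∑ j : Vp S, w x j.1 := by
    intro x
    rw [← Finset.sum_add_sum_compl S (w x)]
    congr 1
    exact Finset.sum_subtype Sᶜ (fun y => Finset.mem_compl) (w x)
  have hdegS_nn : ∀ i : Vp S, 0 ≤ degS i := by
    intro i'
    rw [hdegS]
    exact Finset.sum_nonneg fun _ _ => hw_nonneg _ _
  have hmuS_nn : 0 ≤ muS := by
    rw [hmuS]
    exact Finset.sum_nonneg fun _ _ => Finset.sum_nonneg fun _ _ => hw_nonneg _ _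
  -- total volume decomposition
  have hvol_eq : (∑ x, deg x)
      = muS + 2 * (∑ i : Vp S, degS i) + ∑ i : Vp S, ∑ j : Vp S, w i.1 j.1 := by
    have h1 : (∑ x, deg x) = (∑ x ∈ S, deg x) + ∑ x : Vp S, deg x.1 := by
      rw [← Finset.sum_add_sum_compl S deg]
      congr 1
      exact Finset.sum_subtype Sᶜ (fun y => Finset.mem_compl) deg
    have h2 : (∑ x ∈ S, deg x)
        = (∑ x ∈ S, ∑ j ∈ S, w x j) + ∑ j : Vp S, degS j := by
      calc (∑ x ∈ S, deg x)
          = ∑ x ∈ S, ((∑ j ∈ S, w x j) + ∑ j : Vp S, w x j.1) := by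
            refine Finset.sum_congr rfl fun x _ => ?_
            rw [hdeg]
            exact hsplit x
        _ = (∑ x ∈ S, ∑ j ∈ S, w x j) + ∑ x ∈ S, ∑ j : Vp S, w x j.1 :=
            Finset.sum_add_distrib
        _ = (∑ x ∈ S, ∑ j ∈ S, w x j) + ∑ j : Vp S, degS j := by
            congr 1
            rw [Finset.sum_comm]
            refine Finset.sum_congr rfl fun j _ => ?_
            rw [hdegS]
            exact Finset.sum_congr rfl fun x _ => hw_symm x j.1
    have h3 : (∑ x : Vp S, deg x.1)
        = (∑ j : Vp S, degS j) + ∑ i : Vp S, ∑ j : Vp S, w i.1 j.1 := by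
      rw [← Finset.sum_add_distrib]
      refine Finset.sum_congr rfl fun x _ => ?_
      rw [hdeg, hdegS]
      exact hsplit x.1
    rw [h1, h2, h3, ← hmuS]
    ring
  -- assocS is bounded by the total volume
  have hbound : ∀ A : Finset (Vp S), assocS A ≤ ∑ x, deg x := by
    intro A
    have hAdeg : (∑ i ∈ A, deg i.1)
        = (∑ i ∈ A, degS i)
          + ((∑ i ∈ A, ∑ j ∈ A, w i.1 j.1) + ∑ i ∈ A, ∑ j ∈ Aᶜ, w i.1 j.1) := by
      rw [← Finset.sum_add_distrib, ← Finset.sum_add_distrib]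
      refine Finset.sum_congr rfl fun x _ => ?_
      rw [Finset.sum_add_sum_compl A (fun j => w x.1 j.1), hdeg, hdegS]
      exact hsplit x.1
    rw [hassocS]
    dsimp only
    rw [hAdeg, hvol_eq]
    have t1 : (∑ i ∈ A, degS i) ≤ ∑ i : Vp S, degS i :=
      Finset.sum_le_sum_of_subset_of_nonneg (Finset.subset_univ A) fun i _ _ => hdegS_nn i
    have t2 : (∑ i ∈ A, ∑ j ∈ A, w i.1 j.1) ≤ ∑ i : Vp S, ∑ j : Vp S, w i.1 j.1 := by
      calc (∑ i ∈ A, ∑ j ∈ A, w i.1 j.1)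
          ≤ ∑ i ∈ A, ∑ j : Vp S, w i.1 j.1 :=
            Finset.sum_le_sum fun i _ =>
              Finset.sum_le_sum_of_subset_of_nonneg (Finset.subset_univ A)
                fun j _ _ => hw_nonneg _ _
        _ ≤ _ :=
            Finset.sum_le_sum_of_subset_of_nonneg (Finset.subset_univ A)
              fun i _ _ => Finset.sum_nonneg fun j _ => hw_nonneg _ _
    have t3 : muS * (if A = ∅ then (0 : ℝ) else 1) ≤ muS := by
      split
      · simpa using hmuS_nn
      · simp
    linarith
  -- the γθ bound
  have hγθ : (∑ x, deg x) * c0 < γ * θ := by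
    have h' := mul_lt_mul_of_pos_right hγ hθ
    have he : (∑ x, deg x) / θ * c0 * θ = (∑ x, deg x) * c0 := by
      field_simp
    rwa [he] at h'
  -- feasibility of the minimizer
  have hfeas : Feasible (thresholdSet f i) := by
    by_contra hnf
    have hθp := hθpen _ (hthresh_ne i) hnf
    have hnum : γ * θ ≤ (∑ j ∈ thresholdSet f i, g j.1) + nuS
        + γ * pen (thresholdSet f i) := by
      have h1 : γ * θ ≤ γ * pen (thresholdSet f i) :=
        mul_le_mul_of_nonneg_left hθp hγpos.le
      have h2 : 0 ≤ ∑ j ∈ thresholdSet f i, g j.1 :=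
        Finset.sum_nonneg fun j _ => (hg _).le
      linarith
    have hcd : c0 * assocS (thresholdSet f i) ≤ c0 * (∑ x, deg x) :=
      mul_le_mul_of_nonneg_left (hbound _) hc0pos.le
    have hlt : c0 * assocS (thresholdSet f i)
        < (∑ j ∈ thresholdSet f i, g j.1) + nuS + γ * pen (thresholdSet f i) := by
      linarith
    have : c0 < r := (lt_div_iff₀ (hDpos i)).mpr hlt
    linarith
  refine ⟨hfeas, ?_⟩
  -- penalty of a feasible set vanishes
  have hfeas' := hfeas
  rw [hFeas] at hfeas'
  obtain ⟨hne, hkl, hdd⟩ := hfeas'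
  have hpen0 : pen (thresholdSet f i) = 0 := by
    rw [hpen]
    dsimp only
    rw [if_neg (hthresh_ne i).ne_empty]
    have z1 : (∑ j, max 0 ((∑ i' ∈ thresholdSet f i, M j i') - l j)) = 0 :=
      Finset.sum_eq_zero fun j _ => max_eq_left (sub_nonpos.mpr (hkl j).2)
    have z2 : (∑ j, max 0 (k j - ∑ i' ∈ thresholdSet f i, M j i')) = 0 :=
      Finset.sum_eq_zero fun j _ => max_eq_left (sub_nonpos.mpr (by linarith [(hkl j).1]))
    have z3 : (∑ u ∈ thresholdSet f i, ∑ v ∈ thresholdSet f i, max 0 (dist u v - d0)) = 0 :=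
      Finset.sum_eq_zero fun u hu => Finset.sum_eq_zero fun v hv =>
        max_eq_left (sub_nonpos.mpr (hdd u hu v hv))
    rw [z1, z2, z3]
    ring
  -- final ratio comparison
  rw [hrdef, hpen0] at hr_lt
  simp only [mul_zero, add_zero] at hr_lt
  rw [hc0def, div_lt_div_iff₀ (hDpos i) hDA0] at hr_lt
  have hNs : 0 < (∑ j ∈ thresholdSet f i, g j.1) + nuS := by
    have := Finset.sum_pos (fun j _ => hg j.1) (hthresh_ne i)
    linarith
  rw [div_lt_div_iff₀ (by linarith : (0:ℝ) < (∑ i ∈ A0, g i.1) + nuS) hNs]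
  linarith
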